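/- (Necessity step in the proof of Proposition C.2.) Suppose that for each t' ∈ {1,…,T} the family {φ_ρ} is locally linearly independent on D_{t'} in the summable sense, and that the family of task functions {f_t} satisfies the task arithmetic property on {D_t}. Then for every t' ∈ {1,…,T} and every ρ ∈ ℕ, either ∑_{t ≠ t'} c_{t,ρ} = 0 or φ_ρ(x) = 0 for all x ∈ D_{t'}. -/
import Mathlib


/-- necessity step in the proof of Proposition C.2: if `{φ ρ}` is locally
linearly independent (in the summable sense) on each `D t'` and the task functions
satisfy the task arithmetic property, then for every `t'` and every `ρ`, either
`∑_{t ≠ t'} c t ρ = 0` or `φ ρ` vanishes on `D t'`. -/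
theorem task_arithmetic_forces_vanishing_cross_coefficients
    {X : Type*} {T : ℕ}
    (D : Fin T → Set X)
    (hdisj : ∀ t t' : Fin T, t ≠ t' → Disjoint (D t) (D t'))
    (φ : ℕ → X → ℝ) (c : Fin T → ℕ → ℝ)
    (hsum : ∀ (t : Fin T) (x : X), Summable fun ρ => c t ρ * φ ρ x)
    (f : Fin T → X → ℝ)
    (hf : ∀ (t : Fin T) (x : X), f t x = ∑' ρ, c t ρ * φ ρ x)
    (hLLI : ∀ t' : Fin T, ∀ b : ℕ → ℝ,
      (∀ x ∈ D t', Summable fun ρ => b ρ * φ ρ x) →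
      (∀ x ∈ D t', ∑' ρ, b ρ * φ ρ x = 0) →
      ∀ ρ : ℕ, b ρ = 0 ∨ ∀ x ∈ D t', φ ρ x = 0)
    (hTA : ∀ t' : Fin T, ∀ x ∈ D t', ∑ t, f t x = f t' x) :
    ∀ (t' : Fin T) (ρ : ℕ),
      (∑ t ∈ Finset.univ.filter (· ≠ t'), c t ρ) = 0 ∨
      ∀ x ∈ D t', φ ρ x = 0 := by
  intro t' ρ
  set s : Finset (Fin T) := Finset.univ.filter (· ≠ t') with hs
  set b : ℕ → ℝ := fun ρ => ∑ t ∈ s, c t ρ with hb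
  have hbx : ∀ x, (fun ρ => b ρ * φ ρ x) = fun ρ => ∑ t ∈ s, c t ρ * φ ρ x := by
    intro x; funext ρ; simp [hb, Finset.sum_mul]
  have hsummable : ∀ x ∈ D t', Summable fun ρ => b ρ * φ ρ x := by
    intro x _
    rw [hbx]
    exact summable_sum (fun t _ => hsum t x)
  have hzero : ∀ x ∈ D t', ∑' ρ, b ρ * φ ρ x = 0 := by
    intro x hx
    rw [hbx, Summable.tsum_finsetSum (fun t _ => hsum t x)]
    have h1 : ∑ t ∈ s, f t x = 0 := by
      have h2 : ∑ t, f t x = f t' x + ∑ t ∈ s, f t x := by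
        rw [hs, ← Finset.sum_filter_add_sum_filter_not Finset.univ (· = t') (f · x)]
        simp [Finset.filter_eq']
      have := hTA t' x hx
      linarith
    calc ∑ t ∈ s, ∑' ρ, c t ρ * φ ρ x = ∑ t ∈ s, f t x := by
          exact Finset.sum_congr rfl fun t _ => (hf t x).symm
      _ = 0 := h1
  exact hLLI t' b hsummable hzero ρ
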